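/- Let D be a finite set of weighted axis-parallel rectangles, let S be an optimum solution of cardinality at most k with maximum-weight element R_max, and let D' be obtained from D by removing every rectangle of weight greater than ω(R_max) and every rectangle of weight at most ε·ω(R_max)/k. Then opt_k(D') ≥ (1−ε)·opt_k(D). -/

import Mathlib

open Finset

def IsRect (R : Set (ℝ × ℝ)) : Prop :=
  ∃ x1 x2 y1 y2 : ℝ, R = Set.Icc x1 x2 ×ˢ Set.Icc y1 y2

def IsSeg (R : Set (ℝ × ℝ)) : Prop :=
  ∃ x1 x2 y1 y2 : ℝ, (x1 = x2 ∨ y1 = y2) ∧ R = Set.Icc x1 x2 ×ˢ Set.Icc y1 y2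

/-- A solution: a subset of `D` of cardinality at most `k` consisting of pairwise disjoint
objects. -/
def IsSolution (D : Finset (Set (ℝ × ℝ))) (k : ℕ) (S : Finset (Set (ℝ × ℝ))) : Prop :=
  S ⊆ D ∧ S.card ≤ k ∧ (↑S : Set (Set (ℝ × ℝ))).Pairwise Disjoint

/-- `optk D ω k` : the maximum total `ω`-weight of a set of at most `k` pairwise disjoint
members of `D`. -/
noncomputable def optk (D : Finset (Set (ℝ × ℝ))) (ω : Set (ℝ × ℝ) → ℝ) (k : ℕ) : ℝ :=
  sSup {w : ℝ | ∃ S : Finset (Set (ℝ × ℝ)), IsSolution D k S ∧ w = ∑ R ∈ S, ω R}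

/-- removing rectangles heavier than `ω Rmax` or of weight at most
`ε·ω Rmax / k` decreases the optimum by at most a factor `(1-ε)`. -/
theorem stmt1 (D : Finset (Set (ℝ × ℝ))) (ω : Set (ℝ × ℝ) → ℝ) (k : ℕ) (hk : 0 < k)
    (ε : ℝ) (hε : 0 < ε)
    (hrect : ∀ R ∈ D, IsRect R) (hpos : ∀ R ∈ D, 0 < ω R)
    (S : Finset (Set (ℝ × ℝ))) (hS : IsSolution D k S)
    (hopt : ∑ R ∈ S, ω R = optk D ω k)
    (Rmax : Set (ℝ × ℝ)) (hmem : Rmax ∈ S) (hmax : ∀ R ∈ S, ω R ≤ ω Rmax)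
    (D' : Finset (Set (ℝ × ℝ)))
    (hD' : ∀ R, R ∈ D' ↔ R ∈ D ∧ ω R ≤ ω Rmax ∧ ε * ω Rmax / k < ω R) :
    (1 - ε) * optk D ω k ≤ optk D' ω k := by
  classical
  obtain ⟨hSsub, hScard, hSdisj⟩ := hS
  set t : ℝ := ε * ω Rmax / k with ht
  have hRmaxpos : 0 < ω Rmax := hpos Rmax (hSsub hmem)
  have htnonneg : 0 ≤ t :=
    div_nonneg (mul_nonneg hε.le hRmaxpos.le) (Nat.cast_nonneg k)
  set S' := S.filter (fun R => t < ω R) with hS'def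
  have hS'sub : S' ⊆ D' := by
    intro R hR
    rw [hD']
    rw [hS'def, mem_filter] at hR
    exact ⟨hSsub hR.1, hmax R hR.1, hR.2⟩
  have hS'sol : IsSolution D' k S' := by
    refine ⟨hS'sub, le_trans (card_le_card (filter_subset _ _)) hScard, ?_⟩
    refine hSdisj.mono ?_
    exact_mod_cast filter_subset _ _
  have hbdd : BddAbove {w : ℝ | ∃ T, IsSolution D' k T ∧ w = ∑ R ∈ T, ω R} := by
    refine ⟨∑ R ∈ D', ω R, ?_⟩
    rintro w ⟨T, hT, rfl⟩
    exact Finset.sum_le_sum_of_subset_of_nonneg hT.1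
      (fun R hR _ => (hpos R ((hD' R).1 hR).1).le)
  have hle : ∑ R ∈ S', ω R ≤ optk D' ω k := le_csSup hbdd ⟨S', hS'sol, rfl⟩
  have hsplit : ∑ R ∈ S', ω R + ∑ R ∈ S.filter (fun R => ¬ t < ω R), ω R
      = ∑ R ∈ S, ω R := Finset.sum_filter_add_sum_filter_not S _ ω
  have hsmall : ∑ R ∈ S.filter (fun R => ¬ t < ω R), ω R ≤ (k : ℝ) * t := by
    calc ∑ R ∈ S.filter (fun R => ¬ t < ω R), ω R
        ≤ ∑ _R ∈ S.filter (fun R => ¬ t < ω R), t :=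
          Finset.sum_le_sum (fun R hR => le_of_not_gt (mem_filter.1 hR).2)
      _ = ((S.filter (fun R => ¬ t < ω R)).card : ℝ) * t := by
          rw [Finset.sum_const, nsmul_eq_mul]
      _ ≤ (k : ℝ) * t := by
          refine mul_le_mul_of_nonneg_right ?_ htnonneg
          exact_mod_cast le_trans (card_le_card (filter_subset _ _)) hScard
  have hkt : (k : ℝ) * t = ε * ω Rmax := by
    have hk' : (k : ℝ) ≠ 0 := Nat.cast_ne_zero.2 hk.ne'
    rw [ht]; field_simp
  have hRmax_le_opt : ω Rmax ≤ optk D ω k := by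
    rw [← hopt]
    exact Finset.single_le_sum (fun R hR => (hpos R (hSsub hR)).le) hmem
  nlinarith [hle, hsplit, hsmall, hkt, hRmax_le_opt, hε, hopt,
    mul_le_mul_of_nonneg_left hRmax_le_opt hε.le]
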